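/- Define g(λ) := λ + 2β − f'(0) and G(λ) := (2αβ/Δ(λ))·[α + √(dλ)/tanh(√(λ/d)) + √(dλ)/sinh(√(λ/d))] for λ > 0, with G(0) := 2β. Then G is strictly decreasing on (0,∞) with G(λ) → 0 as λ → +∞, g is strictly increasing with g(0) = 2β − f'(0) < 2β = G(0), and there exists a unique λ₀ > 0 such that g(λ₀) = G(λ₀); moreover g(λ) < G(λ) for all λ ∈ [0, λ₀) and g(λ) > G(λ) for all λ > λ₀. Equivalently, y(λ₀) = 1, y(λ) < 1 for λ ∈ (0, λ₀), and y(λ) > 1 for λ > λ₀. -/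

import Mathlib

open Set Filter

noncomputable section

/-- `Δ(λ) = α² + dλ + 2α√(dλ)/tanh(√(λ/d))`. -/
def Δfun (α d lam : ℝ) : ℝ :=
  α ^ 2 + d * lam + 2 * α * Real.sqrt (d * lam) / Real.tanh (Real.sqrt (lam / d))

/-- `y(λ) = [Δ(λ)/(2αβ)·(λ + 2β − f'(0)) − (α + √(dλ)/tanh(√(λ/d)))]·sinh(√(λ/d))/√(dλ)`,
where `r` stands for `f'(0)`. -/
def yfun (α β d r lam : ℝ) : ℝ :=
  (Δfun α d lam / (2 * α * β) * (lam + 2 * β - r)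
      - (α + Real.sqrt (d * lam) / Real.tanh (Real.sqrt (lam / d))))
    * (Real.sinh (Real.sqrt (lam / d)) / Real.sqrt (d * lam))

open scoped Classical

/-- `g(λ) = λ + 2β − f'(0)`, where `r` stands for `f'(0)`. -/
def gfun (β r lam : ℝ) : ℝ := lam + 2 * β - r

/-- `G(λ) = (2αβ/Δ(λ))·[α + √(dλ)/tanh(√(λ/d)) + √(dλ)/sinh(√(λ/d))]` for `λ > 0`,
with `G(0) = 2β`. -/
def Gfun (α β d lam : ℝ) : ℝ :=
  if lam = 0 then 2 * β
  else 2 * α * β / Δfun α d lam *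
    (α + Real.sqrt (d * lam) / Real.tanh (Real.sqrt (lam / d))
       + Real.sqrt (d * lam) / Real.sinh (Real.sqrt (lam / d)))

/-! ### Auxiliary lemmas -/

lemma tanh_lt_tanh' {a b : ℝ} (h : a < b) : Real.tanh a < Real.tanh b := by
  rw [Real.tanh_eq_sinh_div_cosh, Real.tanh_eq_sinh_div_cosh,
    div_lt_div_iff₀ (Real.cosh_pos a) (Real.cosh_pos b)]
  have := Real.sinh_pos_iff.mpr (sub_pos.mpr h)
  rw [Real.sinh_sub] at this
  nlinarith

lemma tanh_pos' {x : ℝ} (h : 0 < x) : 0 < Real.tanh x := by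
  simpa using tanh_lt_tanh' h

lemma tanh_nonneg' {x : ℝ} (h : 0 ≤ x) : 0 ≤ Real.tanh x := by
  rcases h.eq_or_lt with h | h
  · simp [← h]
  · exact (tanh_pos' h).le

lemma continuous_tanh' : Continuous Real.tanh := by
  have : Real.tanh = fun x => Real.sinh x / Real.cosh x := by
    ext x; exact Real.tanh_eq_sinh_div_cosh x
  rw [this]
  exact Real.continuous_sinh.div Real.continuous_cosh fun x => (Real.cosh_pos x).ne'

/-- The simplified denominator `α + d·s·tanh(s/2)` with `s = √(λ/d)`. -/
def Hfun (α d lam : ℝ) : ℝ :=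
  α + d * Real.sqrt (lam / d) * Real.tanh (Real.sqrt (lam / d) / 2)

lemma Hfun_ge {α d lam : ℝ} (hd : 0 < d) : α ≤ Hfun α d lam := by
  have h1 : 0 ≤ Real.sqrt (lam / d) := Real.sqrt_nonneg _
  have h2 : 0 ≤ Real.tanh (Real.sqrt (lam / d) / 2) := tanh_nonneg' (by positivity)
  have : 0 ≤ d * Real.sqrt (lam / d) * Real.tanh (Real.sqrt (lam / d) / 2) := by positivity
  unfold Hfun; linarith

lemma Hfun_pos {α d lam : ℝ} (hα : 0 < α) (hd : 0 < d) : 0 < Hfun α d lam :=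
  lt_of_lt_of_le hα (Hfun_ge hd)

lemma Hfun_strictMonoOn {α d : ℝ} (hd : 0 < d) :
    StrictMonoOn (Hfun α d) (Ici 0) := by
  intro a ha b hb hab
  have ha' : (0:ℝ) ≤ a := ha
  have hsa : Real.sqrt (a / d) < Real.sqrt (b / d) :=
    Real.sqrt_lt_sqrt (by positivity) (by exact div_lt_div_of_pos_right hab hd)
  have h2 : Real.tanh (Real.sqrt (a / d) / 2) < Real.tanh (Real.sqrt (b / d) / 2) :=
    tanh_lt_tanh' (by linarith)
  have h3 : 0 ≤ Real.tanh (Real.sqrt (a / d) / 2) := tanh_nonneg' (by positivity)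
  have h4 : Real.sqrt (a/d) * Real.tanh (Real.sqrt (a / d) / 2)
      < Real.sqrt (b/d) * Real.tanh (Real.sqrt (b / d) / 2) := by
    rcases (Real.sqrt_nonneg (a/d)).eq_or_lt with h | h
    · have : 0 < Real.sqrt (b/d) := by linarith
      have : 0 < Real.tanh (Real.sqrt (b / d) / 2) := tanh_pos' (by linarith [Real.sqrt_nonneg (a/d)])
      nlinarith
    · nlinarith
  unfold Hfun; nlinarith

lemma Hfun_tendsto {α d : ℝ} (hd : 0 < d) :
    Tendsto (Hfun α d) atTop atTop := by
  have ht : (0:ℝ) < Real.tanh (1/2) := tanh_pos' (by norm_num)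
  have hbase : Tendsto (fun lam : ℝ => α + d * Real.tanh (1/2) * Real.sqrt (lam / d))
      atTop atTop := by
    apply tendsto_atTop_add_const_left
    apply Tendsto.const_mul_atTop (by positivity)
    have hsq : Tendsto Real.sqrt atTop atTop := by
      apply tendsto_atTop_atTop.mpr
      intro b
      refine ⟨max (b^2) 0, fun a ha => ?_⟩
      calc b ≤ |b| := le_abs_self b
        _ = Real.sqrt (b^2) := (Real.sqrt_sq_eq_abs b).symm
        _ ≤ Real.sqrt a := Real.sqrt_le_sqrt (le_trans (le_max_left _ _) ha)
    exact hsq.comp (tendsto_id.atTop_div_const hd)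
  apply tendsto_atTop_mono' atTop _ hbase
  filter_upwards [eventually_ge_atTop d] with lam hlam
  have h1 : (1:ℝ) ≤ lam / d := (one_le_div hd).mpr hlam
  have h2 : 1 ≤ Real.sqrt (lam / d) := by
    rw [show (1:ℝ) = Real.sqrt 1 by simp]
    exact Real.sqrt_le_sqrt h1
  have h3 : Real.tanh (1/2) ≤ Real.tanh (Real.sqrt (lam / d) / 2) := by
    rcases eq_or_lt_of_le (by linarith : (1:ℝ)/2 ≤ Real.sqrt (lam/d)/2) with h | h
    · rw [h]
    · exact (tanh_lt_tanh' h).le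
  have h4 : 0 ≤ Real.sqrt (lam / d) := Real.sqrt_nonneg _
  unfold Hfun
  have : d * Real.tanh (1/2) * Real.sqrt (lam/d) ≤
      d * Real.sqrt (lam/d) * Real.tanh (Real.sqrt (lam / d) / 2) := by
    nlinarith [mul_le_mul_of_nonneg_left h3 (by positivity : (0:ℝ) ≤ d * Real.sqrt (lam/d))]
  linarith

lemma Hfun_continuous {α d : ℝ} : Continuous (Hfun α d) := by
  have hs : Continuous fun lam : ℝ => Real.sqrt (lam / d) :=
    Real.continuous_sqrt.comp (continuous_id.div_const d)
  exact continuous_const.add ((continuous_const.mul hs).mul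
    (continuous_tanh'.comp (hs.div_const 2)))

lemma setup' {d lam : ℝ} (hd : 0 < d) (hlam : 0 < lam) :
    0 < Real.sqrt (lam / d) ∧ Real.sqrt (d * lam) = d * Real.sqrt (lam / d) ∧
      lam = d * Real.sqrt (lam / d) ^ 2 := by
  refine ⟨Real.sqrt_pos.mpr (by positivity), ?_, ?_⟩
  · have h1 : d * lam = d ^ 2 * (lam / d) := by field_simp
    rw [h1, Real.sqrt_mul (by positivity), Real.sqrt_sq hd.le]
  · rw [Real.sq_sqrt (by positivity : (0:ℝ) ≤ lam / d)]; field_simp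

lemma delta_eq {α d lam : ℝ} (hd : 0 < d) (hlam : 0 < lam) :
    Δfun α d lam = Hfun α d lam *
      (α + Real.sqrt (d * lam) / Real.tanh (Real.sqrt (lam / d))
         + Real.sqrt (d * lam) / Real.sinh (Real.sqrt (lam / d))) := by
  obtain ⟨hs, hdl, hlam_eq⟩ := setup' hd hlam
  set s := Real.sqrt (lam / d) with hs_def
  have hsu : 0 < Real.sinh (s / 2) := Real.sinh_pos_iff.mpr (by linarith)
  have hcu : 0 < Real.cosh (s / 2) := Real.cosh_pos _
  have hsinh : Real.sinh s = 2 * Real.sinh (s / 2) * Real.cosh (s / 2) := by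
    rw [show s = 2*(s/2) by ring, Real.sinh_two_mul]; ring_nf
  have hcosh : Real.cosh s = Real.cosh (s / 2) ^ 2 + Real.sinh (s / 2) ^ 2 := by
    rw [show s = 2*(s/2) by ring, Real.cosh_two_mul]; ring_nf
  have hpyth : Real.cosh (s / 2) ^ 2 = Real.sinh (s / 2) ^ 2 + 1 := Real.cosh_sq _
  unfold Δfun Hfun
  rw [← hs_def, hdl, Real.tanh_eq_sinh_div_cosh, Real.tanh_eq_sinh_div_cosh,
    hsinh, hcosh]
  rw [show d * lam = d ^ 2 * s ^ 2 by rw [hlam_eq]; ring]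
  set S := Real.sinh (s / 2)
  set C := Real.cosh (s / 2)
  field_simp
  linear_combination (α*d*s*C + d^2*s^2*S) * hpyth

lemma Sfac_pos {α d lam : ℝ} (hα : 0 < α) (hd : 0 < d) (hlam : 0 < lam) :
    0 < α + Real.sqrt (d * lam) / Real.tanh (Real.sqrt (lam / d))
         + Real.sqrt (d * lam) / Real.sinh (Real.sqrt (lam / d)) := by
  obtain ⟨hs, hdl, -⟩ := setup' hd hlam
  have h1 : 0 < Real.tanh (Real.sqrt (lam / d)) := tanh_pos' hs
  have h2 : 0 < Real.sinh (Real.sqrt (lam / d)) := Real.sinh_pos_iff.mpr hs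
  have h3 : 0 < Real.sqrt (d * lam) := by rw [hdl]; positivity
  positivity

lemma Δfun_pos {α d lam : ℝ} (hα : 0 < α) (hd : 0 < d) (hlam : 0 < lam) :
    0 < Δfun α d lam := by
  rw [delta_eq hd hlam]
  exact mul_pos (Hfun_pos hα hd) (Sfac_pos hα hd hlam)

lemma Gfun_eq {α β d lam : ℝ} (hα : 0 < α) (hβ : 0 < β) (hd : 0 < d) (hlam : 0 ≤ lam) :
    Gfun α β d lam = 2 * α * β / Hfun α d lam := by
  rcases hlam.eq_or_lt with h | h
  · subst h
    have h0 : Real.sqrt ((0:ℝ) / d) = 0 := by simp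
    simp only [Gfun, if_pos rfl, Hfun, h0]
    rw [show α + d * 0 * Real.tanh (0/2) = α by ring]
    field_simp
    simp
  · rw [Gfun, if_neg h.ne', delta_eq hd h]
    obtain ⟨S, hSdef, hSpos⟩ : ∃ S : ℝ,
        (α + Real.sqrt (d * lam) / Real.tanh (Real.sqrt (lam / d))
          + Real.sqrt (d * lam) / Real.sinh (Real.sqrt (lam / d))) = S ∧ 0 < S :=
      ⟨_, rfl, Sfac_pos hα hd h⟩
    rw [hSdef]
    have hH := Hfun_pos (lam := lam) (α := α) hα hd
    field_simp

lemma y_sub_one {α β d r lam : ℝ} (hα : 0 < α) (hβ : 0 < β) (hd : 0 < d) (hlam : 0 < lam) :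
    yfun α β d r lam - 1 =
      (Δfun α d lam * Real.sinh (Real.sqrt (lam / d)) / (2 * α * β * Real.sqrt (d * lam)))
        * (gfun β r lam - Gfun α β d lam) := by
  obtain ⟨hs, hdl, -⟩ := setup' hd hlam
  have h2 : 0 < Real.sinh (Real.sqrt (lam / d)) := Real.sinh_pos_iff.mpr hs
  have h3 : 0 < Real.sqrt (d * lam) := by rw [hdl]; positivity
  have hΔ : 0 < Δfun α d lam := Δfun_pos hα hd hlam
  rw [Gfun, if_neg hlam.ne']
  unfold yfun gfun
  field_simp
  ring

/-- **Existence and uniqueness of `λ₀`**: `G` is strictly decreasing on `(0,∞)` and tends to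
`0` at `+∞`, `g` is strictly increasing with `g(0) = 2β − f'(0) < 2β = G(0)`, and there is a
unique `λ₀ > 0` with `g(λ₀) = G(λ₀)`; moreover `g < G` on `[0,λ₀)` and `g > G` on `(λ₀,∞)`,
equivalently `y(λ₀) = 1`, `y < 1` on `(0,λ₀)` and `y > 1` on `(λ₀,∞)`. -/
theorem lambda_zero_exists_unique
    (α β d : ℝ) (hα : 0 < α) (hβ : 0 < β) (hd : 0 < d)
    (f : ℝ → ℝ) (hf : ContDiff ℝ 1 f) (hf0 : f 0 = 0) (hf1 : f 1 = 0)
    (hfpos : ∀ u ∈ Ioo (0:ℝ) 1, 0 < f u ∧ f u ≤ deriv f 0 * u)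
    (hr : 0 < deriv f 0) :
    StrictAntiOn (Gfun α β d) (Ioi 0) ∧
    Tendsto (Gfun α β d) atTop (nhds 0) ∧
    StrictMono (gfun β (deriv f 0)) ∧
    gfun β (deriv f 0) 0 = 2 * β - deriv f 0 ∧
    gfun β (deriv f 0) 0 < Gfun α β d 0 ∧
    Gfun α β d 0 = 2 * β ∧
    ∃ lam0 : ℝ, 0 < lam0 ∧
      gfun β (deriv f 0) lam0 = Gfun α β d lam0 ∧
      (∀ lam : ℝ, 0 < lam → gfun β (deriv f 0) lam = Gfun α β d lam → lam = lam0) ∧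
      (∀ lam ∈ Ico (0:ℝ) lam0, gfun β (deriv f 0) lam < Gfun α β d lam) ∧
      (∀ lam : ℝ, lam0 < lam → Gfun α β d lam < gfun β (deriv f 0) lam) ∧
      yfun α β d (deriv f 0) lam0 = 1 ∧
      (∀ lam ∈ Ioo (0:ℝ) lam0, yfun α β d (deriv f 0) lam < 1) ∧
      (∀ lam : ℝ, lam0 < lam → 1 < yfun α β d (deriv f 0) lam) := by
  set r := deriv f 0 with hr_def
  -- F := g - G (using the smooth formula for G)
  set G' : ℝ → ℝ := fun lam => 2 * α * β / Hfun α d lam with hG'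
  have hGeq : ∀ lam : ℝ, 0 ≤ lam → Gfun α β d lam = G' lam := fun lam h =>
    Gfun_eq hα hβ hd h
  have hH0 : Hfun α d 0 = α := by
    simp [Hfun, Real.sqrt_eq_zero', Real.tanh_zero]
  have hG'0 : G' 0 = 2 * β := by
    show 2 * α * β / Hfun α d 0 = 2 * β
    rw [hH0]; field_simp
  set F : ℝ → ℝ := fun lam => gfun β r lam - G' lam with hF
  have hFmono : StrictMonoOn F (Ici 0) := by
    intro a ha b hb hab
    have h1 : gfun β r a < gfun β r b := by unfold gfun; linarith
    have h2 : G' b < G' a :=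
      div_lt_div_of_pos_left (by positivity) (Hfun_pos hα hd) (Hfun_strictMonoOn hd ha hb hab)
    simp only [hF]; linarith
  have hFcont : Continuous F := by
    apply Continuous.sub
    · unfold gfun; continuity
    · exact continuous_const.div Hfun_continuous fun x => (Hfun_pos hα hd).ne'
  have hF0 : F 0 = -r := by
    simp only [hF, hG'0, gfun]; ring
  have hFr : 0 < F r := by
    have h1 : Hfun α d 0 < Hfun α d r := Hfun_strictMonoOn hd (mem_Ici.mpr le_rfl) (mem_Ici.mpr hr.le) hr
    rw [hH0] at h1
    have h2 : G' r < 2 * β :=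
      calc G' r < 2 * α * β / α := div_lt_div_of_pos_left (by positivity) hα h1
        _ = 2 * β := by field_simp
    have : gfun β r r = 2 * β := by unfold gfun; ring
    simp only [hF, this]; linarith
  -- IVT
  have hsub : Ioo (F 0) (F r) ⊆ F '' Ioo 0 r :=
    intermediate_value_Ioo hr.le hFcont.continuousOn
  obtain ⟨lam0, hlam0mem, hFlam0⟩ : ∃ lam0 ∈ Ioo (0:ℝ) r, F lam0 = 0 := by
    rcases hsub ⟨by rw [hF0]; linarith, hFr⟩ with ⟨x, hx, hx0⟩
    exact ⟨x, hx, hx0⟩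
  have hlam0 : 0 < lam0 := hlam0mem.1
  have hgG : ∀ lam : ℝ, 0 ≤ lam → gfun β r lam - Gfun α β d lam = F lam := by
    intro lam h; rw [hGeq lam h]
  -- positivity of the factor in y − 1
  have hKpos : ∀ lam : ℝ, 0 < lam →
      0 < Δfun α d lam * Real.sinh (Real.sqrt (lam / d)) / (2 * α * β * Real.sqrt (d * lam)) := by
    intro lam h
    obtain ⟨hs, hdl, -⟩ := setup' hd h
    have h2 : 0 < Real.sinh (Real.sqrt (lam / d)) := Real.sinh_pos_iff.mpr hs
    have h3 : 0 < Real.sqrt (d * lam) := by rw [hdl]; positivity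
    have hΔ : 0 < Δfun α d lam := Δfun_pos hα hd h
    positivity
  refine ⟨?_, ?_, ?_, ?_, ?_, ?_, lam0, hlam0, ?_, ?_, ?_, ?_, ?_, ?_, ?_⟩
  · -- G strictly anti on (0,∞)
    intro a ha b hb hab
    rw [hGeq a (le_of_lt ha), hGeq b (le_of_lt hb)]
    exact div_lt_div_of_pos_left (by positivity) (Hfun_pos hα hd)
      (Hfun_strictMonoOn hd (mem_Ici.mpr (le_of_lt ha)) (mem_Ici.mpr (le_of_lt hb)) hab)
  · -- tendsto 0
    have h1 : Tendsto G' atTop (nhds 0) :=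
      Tendsto.div_atTop tendsto_const_nhds (Hfun_tendsto hd)
    apply h1.congr'
    filter_upwards [eventually_ge_atTop (0:ℝ)] with lam h
    exact (hGeq lam h).symm
  · intro a b hab; unfold gfun; linarith
  · unfold gfun; ring
  · rw [hGeq 0 le_rfl, hG'0]; unfold gfun; linarith
  · rw [hGeq 0 le_rfl, hG'0]
  · -- g lam0 = G lam0
    have := hgG lam0 hlam0.le
    rw [hFlam0] at this; linarith
  · -- uniqueness
    intro lam hlam heq
    have h1 : F lam = 0 := by rw [← hgG lam hlam.le, heq]; ring
    exact hFmono.injOn hlam.le hlam0.le (by rw [h1, hFlam0])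
  · -- g < G on [0, lam0)
    rintro lam ⟨h0, h1⟩
    have : F lam < F lam0 := hFmono h0 hlam0.le h1
    rw [hFlam0] at this
    have h2 := hgG lam h0
    linarith
  · -- G < g on (lam0, ∞)
    intro lam h1
    have : F lam0 < F lam := hFmono hlam0.le ((hlam0.trans h1).le) h1
    rw [hFlam0] at this
    have h2 := hgG lam ((hlam0.trans h1).le)
    linarith
  · -- y lam0 = 1
    have hy := y_sub_one (r := r) hα hβ hd hlam0
    have h2 := hgG lam0 hlam0.le
    rw [hFlam0] at h2
    have : gfun β r lam0 - Gfun α β d lam0 = 0 := h2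
    rw [this, mul_zero] at hy
    linarith
  · -- y < 1 on (0, lam0)
    rintro lam ⟨h0, h1⟩
    have hy := y_sub_one (r := r) hα hβ hd h0
    have hFlt : F lam < 0 := by
      have := hFmono h0.le hlam0.le h1; rw [hFlam0] at this; linarith
    have h2 : gfun β r lam - Gfun α β d lam < 0 := by rw [hgG lam h0.le]; exact hFlt
    nlinarith [hKpos lam h0]
  · -- y > 1 on (lam0, ∞)
    intro lam h1
    have h0 : (0:ℝ) < lam := lt_trans hlam0 h1
    have hy := y_sub_one (r := r) hα hβ hd h0
    have hFgt : 0 < F lam := by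
      have := hFmono hlam0.le h0.le h1; rw [hFlam0] at this; linarith
    have h2 : 0 < gfun β r lam - Gfun α β d lam := by rw [hgG lam h0.le]; exact hFgt
    nlinarith [hKpos lam h0]
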